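/- The 5-dimensional filiform real nilpotent Lie algebra L_{5,6}, with basis X1,...,X5 and nontrivial brackets [X1,X2] = X3, [X1,X3] = X4, [X1,X4] = X5, [X2,X3] = X5, admits a contact form: the dual basis element x5 satisfies x5 ∧ (dx5)^2 ≠ 0. -/

import Mathlib

set_option maxRecDepth 10000
set_option maxHeartbeats 1000000

open scoped BigOperators

noncomputable def etaWedgeDPow {L : Type*} [LieRing L] [LieAlgebra ℝ L]
    (η : Module.Dual ℝ L) (n : ℕ) : (Fin (2 * n + 1) → L) → ℝ :=
  fun v =>
    ((2 : ℝ) ^ n * n.factorial)⁻¹ *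
      ∑ σ : Equiv.Perm (Fin (2 * n + 1)),
        ((Equiv.Perm.sign σ : ℤ) : ℝ) *
          (η (v (σ ⟨0, by omega⟩)) *
            ∏ i : Fin n,
              (-η ⁅v (σ ⟨2 * (i : ℕ) + 1, by omega⟩), v (σ ⟨2 * (i : ℕ) + 2, by omega⟩)⁆))

def Bm : Fin 5 → Fin 5 → ℤ :=
  ![![0,0,0,1,0], ![0,0,1,0,0], ![0,-1,0,0,0], ![-1,0,0,0,0], ![0,0,0,0,0]]
def Em : Fin 5 → ℤ := ![0,0,0,0,1]

theorem intSum :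
    (∑ σ : Equiv.Perm (Fin 5), ((Equiv.Perm.sign σ : ℤ)) *
      (Em (σ 0) * ∏ i : Fin 2, (-(Bm (σ ⟨2*(i:ℕ)+1, by omega⟩) (σ ⟨2*(i:ℕ)+2, by omega⟩))))) = 8 := by
  decide

theorem stmt9 {L : Type*} [LieRing L] [LieAlgebra ℝ L]
    (b : Module.Basis (Fin 5) ℝ L)
    (h12 : ⁅b 0, b 1⁆ = b 2) (h13 : ⁅b 0, b 2⁆ = b 3) (h14 : ⁅b 0, b 3⁆ = b 4)
    (h23 : ⁅b 1, b 2⁆ = b 4)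
    (hzero : ∀ i j : Fin 5, i < j →
      (i, j) ∉ ({(0, 1), (0, 2), (0, 3), (1, 2)} : Set (Fin 5 × Fin 5)) → ⁅b i, b j⁆ = 0) :
    etaWedgeDPow (b.coord 4) 2 ≠ 0 := by
  intro h
  have z04 : ⁅b 0, b 4⁆ = 0 := hzero 0 4 (by decide) (by simp)
  have z13 : ⁅b 1, b 3⁆ = 0 := hzero 1 3 (by decide) (by simp)
  have z14 : ⁅b 1, b 4⁆ = 0 := hzero 1 4 (by decide) (by simp)
  have z23 : ⁅b 2, b 3⁆ = 0 := hzero 2 3 (by decide) (by simp)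
  have z24 : ⁅b 2, b 4⁆ = 0 := hzero 2 4 (by decide) (by simp)
  have z34 : ⁅b 3, b 4⁆ = 0 := hzero 3 4 (by decide) (by simp)
  have hE : ∀ i : Fin 5, b.coord 4 (b i) = (Em i : ℝ) := by
    intro i
    fin_cases i <;>
      simp [Em, Module.Basis.coord_apply, Module.Basis.repr_self, Finsupp.single_apply]
  have rev : ∀ (i j : Fin 5) (z : L), ⁅b i, b j⁆ = z → ⁅b j, b i⁆ = -z := by
    intro i j z hz
    rw [← hz]
    exact neg_eq_iff_eq_neg.mp (lie_skew (b i) (b j))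
  have h21 := rev _ _ _ h12
  have h31 := rev _ _ _ h13
  have h41 := rev _ _ _ h14
  have h32 := rev _ _ _ h23
  have w04 := rev _ _ _ z04
  have w13 := rev _ _ _ z13
  have w14 := rev _ _ _ z14
  have w23 := rev _ _ _ z23
  have w24 := rev _ _ _ z24
  have w34 := rev _ _ _ z34
  have hB : ∀ i j : Fin 5, b.coord 4 ⁅b i, b j⁆ = (Bm i j : ℝ) := by
    intro i j
    fin_cases i <;> fin_cases j <;>
      simp [Bm, h12, h13, h14, h23, h21, h31, h41, h32, z04, z13, z14, z23, z24, z34,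
        w04, w13, w14, w23, w24, w34, lie_self, Module.Basis.coord_apply, Module.Basis.repr_self,
        Finsupp.single_apply, Matrix.vecHead, Matrix.vecTail]
  have hv : ((2 : ℝ) ^ 2 * (2 : ℕ).factorial)⁻¹ *
      ∑ σ : Equiv.Perm (Fin 5),
        ((Equiv.Perm.sign σ : ℤ) : ℝ) *
          ((b.coord 4) (b (σ ⟨0, by omega⟩)) *
            ∏ i : Fin 2,
              (-(b.coord 4) ⁅b (σ ⟨2 * (i : ℕ) + 1, by omega⟩), b (σ ⟨2 * (i : ℕ) + 2, by omega⟩)⁆)) = 0 :=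
    congrFun h (fun i : Fin 5 => b i)
  simp only [hE, hB] at hv
  have hcast : ∑ σ : Equiv.Perm (Fin 5),
      ((Equiv.Perm.sign σ : ℤ) : ℝ) *
        ((Em (σ ⟨0, by omega⟩) : ℝ) *
          ∏ i : Fin 2,
            (-(Bm (σ ⟨2 * (i : ℕ) + 1, by omega⟩) (σ ⟨2 * (i : ℕ) + 2, by omega⟩) : ℝ))) = ((8 : ℤ) : ℝ) := by
    rw [← intSum]
    push_cast
    rfl
  rw [hcast] at hv
  norm_num at hv
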